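/- arXiv:2503.12219 — 2 statements merged into one kernel-verified Lean document; each statement's English description precedes it below -/
import Mathlib

section
/- If f is a hyperbolic homogeneous polynomial of degree D in two real variables, then a nonzero point (x₀,y₀) satisfies f(x₀,y₀) = 0 only if the point is a regular point of f (the gradient of f does not vanish there); consequently, the restriction F(φ) = f(cos φ, sin φ) has only simple zeros, and the number of zeros of F in [0, 2π) equals the number of critical points of F in [0, 2π). -/
open MvPolynomial Real

/-- The Hessian polynomial `f_xx * f_yy - f_xy ^ 2` of a bivariate real polynomial. -/
noncomputable def Hess (f : MvPolynomial (Fin 2) ℝ) : MvPolynomial (Fin 2) ℝ :=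
  pderiv 0 (pderiv 0 f) * pderiv 1 (pderiv 1 f) - (pderiv 1 (pderiv 0 f)) ^ 2

/-- A bivariate polynomial is hyperbolic if its Hessian is negative off the origin. -/
def Hyperbolic (f : MvPolynomial (Fin 2) ℝ) : Prop :=
  ∀ x y : ℝ, ¬(x = 0 ∧ y = 0) → eval ![x, y] (Hess f) < 0

lemma pderiv_comm' (i j : Fin 2) (p : MvPolynomial (Fin 2) ℝ) :
    pderiv i (pderiv j p) = pderiv j (pderiv i p) := by
  induction p using MvPolynomial.induction_on' with
  | monomial s a =>
    simp only [pderiv_monomial]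
    rcases eq_or_ne i j with rfl | hij
    · rfl
    · have he : s - Finsupp.single j 1 - Finsupp.single i 1
          = s - Finsupp.single i 1 - Finsupp.single j 1 := by
        ext k; simp [Finsupp.tsub_apply]; omega
      have h1 : ((s - Finsupp.single j 1 : Fin 2 →₀ ℕ)) i = s i := by
        simp [Finsupp.tsub_apply, Finsupp.single_apply, Ne.symm hij]
      have h2 : ((s - Finsupp.single i 1 : Fin 2 →₀ ℕ)) j = s j := by
        simp [Finsupp.tsub_apply, Finsupp.single_apply, hij]
      rw [he, h1, h2, mul_assoc, mul_assoc, mul_comm ((s j : ℝ))]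
  | add p q hp hq => simp [map_add, hp, hq]

lemma X_mul_pderiv_monomial (i : Fin 2) (s : Fin 2 →₀ ℕ) (a : ℝ) :
    X i * pderiv i (monomial s a) = (s i) • monomial s a := by
  rw [pderiv_monomial, X, monomial_mul]
  rcases Nat.eq_zero_or_pos (s i) with h | h
  · simp [h]
  · rw [smul_monomial]
    have he : Finsupp.single i 1 + (s - Finsupp.single i 1) = s := by
      ext k; simp [Finsupp.tsub_apply, Finsupp.single_apply]
      rcases eq_or_ne i k with rfl | hk
      · simp; omega
      · simp [hk]
    rw [he]
    congr 1
    push_cast; ring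

lemma euler_f2 (n : ℕ) (f : MvPolynomial (Fin 2) ℝ) (hf : f.IsHomogeneous n) :
    X 0 * pderiv 0 f + X 1 * pderiv 1 f = n • f := by
  conv_lhs => rw [f.as_sum]
  conv_rhs => rw [f.as_sum]
  rw [map_sum, map_sum, Finset.mul_sum, Finset.mul_sum, Finset.smul_sum,
    ← Finset.sum_add_distrib]
  refine Finset.sum_congr rfl fun s hs => ?_
  rw [X_mul_pderiv_monomial, X_mul_pderiv_monomial, ← add_smul]
  congr 1
  have h := hf (mem_support_iff.mp hs)
  have : (Finsupp.weight 1) s = s 0 + s 1 := by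
    change (Finsupp.weight fun _ => (1:ℕ)) s = _
    rw [← Finsupp.degree_eq_weight_one, Finsupp.degree_apply,
      Finset.sum_subset (Finset.subset_univ _)
        (fun i _ hi => Finsupp.notMem_support_iff.mp hi), Fin.sum_univ_two]
  omega

lemma hasDerivAt_evalCircle (p : MvPolynomial (Fin 2) ℝ) (φ : ℝ) :
    HasDerivAt (fun t => eval ![Real.cos t, Real.sin t] p)
      (-Real.sin φ * eval ![Real.cos φ, Real.sin φ] (pderiv 0 p)
        + Real.cos φ * eval ![Real.cos φ, Real.sin φ] (pderiv 1 p)) φ := by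
  induction p using MvPolynomial.induction_on with
  | C a => simpa using hasDerivAt_const φ a
  | add p q hp hq =>
    simp only [map_add]
    refine (hp.add hq).congr_deriv ?_
    ring
  | mul_X p i hp =>
    obtain rfl | rfl : i = 0 ∨ i = 1 := by fin_cases i; exacts [Or.inl rfl, Or.inr rfl]
    · simp only [map_mul, eval_X, Matrix.cons_val_zero, pderiv_mul, map_add, eval_add,
        pderiv_X_self, pderiv_X_of_ne (show (0:Fin 2) ≠ 1 by decide), mul_one, mul_zero, add_zero,
        eval_mul]
      refine (hp.mul (Real.hasDerivAt_cos φ)).congr_deriv ?_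
      ring
    · simp only [map_mul, eval_X, Matrix.cons_val_one, Matrix.head_cons, pderiv_mul, map_add,
        eval_add, pderiv_X_self, pderiv_X_of_ne (show (1:Fin 2) ≠ 0 by decide), mul_one, mul_zero,
        add_zero, eval_mul, Matrix.cons_val_zero]
      refine (hp.mul (Real.hasDerivAt_sin φ)).congr_deriv ?_
      ring

section Euler
variable (D : ℕ) (f : MvPolynomial (Fin 2) ℝ) (hf : f.IsHomogeneous D) (x y : ℝ)

lemma eval_euler0 (hf : f.IsHomogeneous D) :
    x * eval ![x, y] (pderiv 0 f) + y * eval ![x, y] (pderiv 1 f)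
      = (D : ℝ) * eval ![x, y] f := by
  have h := congrArg (eval ![x, y]) (euler_f2 D f hf)
  simpa [nsmul_eq_mul] using h

lemma eval_euler1 (hf : f.IsHomogeneous D) :
    x * eval ![x, y] (pderiv 0 (pderiv 0 f)) + y * eval ![x, y] (pderiv 1 (pderiv 0 f))
      = ((D : ℝ) - 1) * eval ![x, y] (pderiv 0 f) := by
  have h0 := congrArg (pderiv (R := ℝ) 0) (euler_f2 D f hf)
  rw [map_nsmul] at h0
  have h := congrArg (eval ![x, y]) h0
  rw [map_nsmul] at h
  simp only [map_add, pderiv_mul, pderiv_X_self,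
    pderiv_X_of_ne (show (1:Fin 2) ≠ 0 by decide), map_nsmul, one_mul, zero_mul,
    mul_zero, add_zero, zero_add, eval_mul, eval_X, Matrix.cons_val_zero,
    Matrix.cons_val_one, Matrix.head_cons, nsmul_eq_mul, eval_add,
    pderiv_comm' 0 1 f] at h
  ring_nf
  ring_nf at h
  linarith [h]

lemma eval_euler2 (hf : f.IsHomogeneous D) :
    x * eval ![x, y] (pderiv 1 (pderiv 0 f)) + y * eval ![x, y] (pderiv 1 (pderiv 1 f))
      = ((D : ℝ) - 1) * eval ![x, y] (pderiv 1 f) := by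
  have h0 := congrArg (pderiv (R := ℝ) 1) (euler_f2 D f hf)
  rw [map_nsmul] at h0
  have h := congrArg (eval ![x, y]) h0
  rw [map_nsmul] at h
  simp only [map_add, pderiv_mul, pderiv_X_self,
    pderiv_X_of_ne (show (0:Fin 2) ≠ 1 by decide), map_nsmul, one_mul, zero_mul,
    mul_zero, add_zero, zero_add, eval_mul, eval_X, Matrix.cons_val_zero,
    Matrix.cons_val_one, Matrix.head_cons, nsmul_eq_mul, eval_add] at h
  ring_nf
  ring_nf at h
  linarith [h]

end Euler


set_option maxHeartbeats 1000000 in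
lemma keyineq (d x y a b c u v w : ℝ) (hd : 2 ≤ d) (hxy : x^2 + y^2 = 1)
    (h1 : x*u + y*v = d*w) (h2 : x*a + y*b = (d-1)*u) (h3 : x*b + y*c = (d-1)*v)
    (hH : a*c - b^2 < 0) :
    w * (-(x*u) - y*v + y^2*a - 2*x*y*b + x^2*c) - (-(y*u) + x*v)^2 < 0 := by
  have hP : x^2*a + 2*x*y*b + y^2*c = (d-1)*d*w := by
    linear_combination x*h2 + y*h3 + (d-1)*h1
  have hR : -(x*y)*a + (x^2-y^2)*b + x*y*c = (d-1)*(-(y*u) + x*v) := by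
    linear_combination (-y)*h2 + x*h3
  set G := -(y*u) + x*v with hGdef
  set Q := y^2*a - 2*x*y*b + x^2*c with hQ
  have hPQ : (x^2*a + 2*x*y*b + y^2*c) * Q - (-(x*y)*a + (x^2-y^2)*b + x*y*c)^2
      = (a*c - b^2) := by
    have h : (x^2*a + 2*x*y*b + y^2*c) * Q - (-(x*y)*a + (x^2-y^2)*b + x*y*c)^2
        = (a*c - b^2)*(x^2+y^2)^2 := by rw [hQ]; ring
    rw [h, hxy]; ring
  have hK : (d-1)*d*w*Q - ((d-1)*G)^2 < 0 := by
    rw [← hP, ← hR]; linarith [hPQ, hH]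
  have hgoal : w * (-(x*u) - y*v + y^2*a - 2*x*y*b + x^2*c) - G^2
      = w * (-(d*w) + Q) - G^2 := by rw [hQ]; linear_combination (-w)*h1
  rw [hgoal]
  by_contra hcon
  push_neg at hcon
  have hdpos : (0:ℝ) ≤ (d-1)*d := by nlinarith
  have h5 := mul_nonneg hdpos hcon
  have h6 : 0 ≤ (d-1) * G^2 := by nlinarith [sq_nonneg G]
  have h7 : 0 ≤ (d-1) * (d*w)^2 := mul_nonneg (by linarith) (sq_nonneg _)
  have h8 : (d-1)*d*(w*(-(d*w)+Q) - G^2)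
      = (d-1)*d*w*Q - (d-1)*(d*w)^2 - (d-1)*d*(G^2) := by ring
  have h9 : ((d-1)*G)^2 = (d-1)^2 * G^2 := by ring
  have h10 : (d-1)*d*(G^2) - (d-1)^2*G^2 = (d-1)*G^2 := by ring
  linarith [hK, h5, h6, h7, h8, h9, h10]


lemma ftc0 (h : ℝ → ℝ) (hc : Continuous h) (t : ℝ) :
    HasDerivAt (fun u => ∫ s in (0:ℝ)..u, h s) (h t) t :=
  intervalIntegral.integral_hasDerivAt_right (hc.intervalIntegrable _ _)
    (hc.aestronglyMeasurable.stronglyMeasurableAtFilter) hc.continuousAt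

open Real

lemma count_level (θ : ℝ → ℝ) (hθc : Continuous θ) (hanti : StrictAnti θ) (k : ℤ)
    (hk : θ 0 - θ (2*π) = 2*π*k) (c : ℝ) :
    {φ ∈ Set.Ico 0 (2*π) | ∃ n : ℤ, θ φ = c + n*π}.ncard = (2*k).toNat := by
  have hπ : (0:ℝ) < π := Real.pi_pos
  set a := θ (2*π) with ha
  set b := θ 0 with hb
  set S := {φ ∈ Set.Ico 0 (2*π) | ∃ n : ℤ, θ φ = c + n*π} with hS
  have himg : θ '' S = {x ∈ Set.Ioc a b | ∃ n : ℤ, x = c + n*π} := by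
    ext y
    constructor
    · rintro ⟨φ, ⟨⟨h0, h2⟩, n, hn⟩, rfl⟩
      exact ⟨⟨hanti h2, hanti.antitone h0⟩, n, hn⟩
    · rintro ⟨⟨hya, hyb⟩, n, hn⟩
      have : y ∈ Set.Icc (θ (2*π)) (θ 0) := ⟨le_of_lt hya, hyb⟩
      obtain ⟨φ, hφ, hφy⟩ := intermediate_value_Icc' (by positivity : (0:ℝ) ≤ 2*π)
        hθc.continuousOn this
      refine ⟨φ, ⟨⟨hφ.1, lt_of_le_of_ne hφ.2 ?_⟩, n, hφy.trans hn⟩, hφy⟩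
      rintro rfl
      exact absurd hφy.symm (ne_of_gt hya)
  have h1 : S.ncard = ({x ∈ Set.Ioc a b | ∃ n : ℤ, x = c + n*π}).ncard := by
    rw [← himg]
    exact (Set.ncard_image_of_injOn (hanti.injective.injOn)).symm
  rw [h1]
  have h2 : {x ∈ Set.Ioc a b | ∃ n : ℤ, x = c + n*π}
      = (fun n : ℤ => c + n*π) '' {n : ℤ | ⌊(a - c)/π⌋ < n ∧ n ≤ ⌊(b - c)/π⌋} := by
    ext x
    simp only [Set.mem_setOf_eq, Set.mem_image, Set.mem_Ioc]
    constructor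
    · rintro ⟨⟨hxa, hxb⟩, n, rfl⟩
      refine ⟨n, ⟨?_, ?_⟩, rfl⟩
      · rw [Int.floor_lt]
        rw [div_lt_iff₀ hπ]
        linarith
      · rw [Int.le_floor]
        rw [le_div_iff₀ hπ]
        linarith
    · rintro ⟨n, ⟨hn1, hn2⟩, rfl⟩
      rw [Int.floor_lt, div_lt_iff₀ hπ] at hn1
      rw [Int.le_floor, le_div_iff₀ hπ] at hn2
      exact ⟨⟨by linarith, by linarith⟩, n, rfl⟩
  rw [h2, Set.ncard_image_of_injective _ (fun m n hmn => by
    have : (m:ℝ) = n := by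
      have := mul_right_cancel₀ (ne_of_gt hπ) (by linarith : (m:ℝ)*π = n*π)
      exact this
    exact_mod_cast this)]
  have h3 : {n : ℤ | ⌊(a - c)/π⌋ < n ∧ n ≤ ⌊(b - c)/π⌋}
      = ↑(Finset.Ioc ⌊(a - c)/π⌋ ⌊(b - c)/π⌋) := by
    ext n; simp [Finset.mem_Ioc]
  rw [h3, Set.ncard_coe_finset, Int.card_Ioc]
  have hbc : (b - c)/π = (a - c)/π + 2*k := by
    field_simp
    linarith [hk]
  rw [hbc]
  rw [show ((a-c)/π + 2*(k:ℝ)) = ((a-c)/π + (2*k : ℤ)) by push_cast; ring, Int.floor_add_intCast]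
  congr 1
  omega

set_option maxHeartbeats 4000000 in
lemma count_eq (g g1 g2 : ℝ → ℝ)
    (hg : ∀ t, HasDerivAt g (g1 t) t) (hg1 : ∀ t, HasDerivAt g1 (g2 t) t)
    (hg2c : Continuous g2)
    (hper : ∀ t, g (t + 2*π) = g t) (hper1 : ∀ t, g1 (t + 2*π) = g1 t)
    (hkey : ∀ t, g t * g2 t - (g1 t)^2 < 0) :
    {φ ∈ Set.Ico 0 (2*π) | g φ = 0}.ncard = {φ ∈ Set.Ico 0 (2*π) | g1 φ = 0}.ncard := by
  have hπ := Real.pi_pos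
  have hgd : Differentiable ℝ g := fun t => (hg t).differentiableAt
  have hg1d : Differentiable ℝ g1 := fun t => (hg1 t).differentiableAt
  have hgc : Continuous g := hgd.continuous
  have hg1c : Continuous g1 := hg1d.continuous
  set r2 : ℝ → ℝ := fun t => g t^2 + g1 t^2 with hr2def
  have hr2pos : ∀ t, 0 < r2 t := by
    intro t
    rcases lt_or_ge 0 (r2 t) with h | h
    · exact h
    · exfalso
      have h1 : g t ^ 2 = 0 := le_antisymm (by simp only [hr2def] at h; nlinarith [sq_nonneg (g1 t)]) (sq_nonneg _)
      have h2 : g1 t ^ 2 = 0 := le_antisymm (by simp only [hr2def] at h; nlinarith [sq_nonneg (g t)]) (sq_nonneg _)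
      have hg0 : g t = 0 := by nlinarith [h1]
      have hg10 : g1 t = 0 := by nlinarith [h2]
      have := hkey t
      rw [hg0, hg10] at this
      norm_num at this
  have hr2c : Continuous r2 := (hgc.pow 2).add (hg1c.pow 2)
  set q : ℝ → ℝ := fun t => (g t * g2 t - g1 t^2) / r2 t with hqdef
  set lam : ℝ → ℝ := fun t => (g t * g1 t + g1 t * g2 t) / r2 t with hlamdef
  have hqc : Continuous q :=
    ((hgc.mul hg2c).sub (hg1c.pow 2)).div hr2c (fun t => (hr2pos t).ne')
  have hlamc : Continuous lam :=
    ((hgc.mul hg1c).add (hg1c.mul hg2c)).div hr2c (fun t => (hr2pos t).ne')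
  set θ0 := Complex.arg (Complex.ofReal (g 0) + Complex.ofReal (g1 0) * Complex.I) with hθ0def
  set θ : ℝ → ℝ := fun t => θ0 + ∫ s in (0:ℝ)..t, q s with hθdef
  set Λ : ℝ → ℝ := fun t => ∫ s in (0:ℝ)..t, lam s with hΛdef
  have hθ' : ∀ t, HasDerivAt θ (q t) t := fun t => (ftc0 q hqc t).const_add θ0
  have hΛ' : ∀ t, HasDerivAt Λ (lam t) t := ftc0 lam hlamc
  have hθ00 : θ 0 = θ0 := by simp [hθdef]
  have hΛ0 : Λ 0 = 0 := by simp [hΛdef]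
  set A : ℝ → ℝ := fun t => g t * cos (θ t) + g1 t * sin (θ t) with hAdef
  set B : ℝ → ℝ := fun t => -(g t) * sin (θ t) + g1 t * cos (θ t) with hBdef
  have hcosθ : ∀ t, HasDerivAt (fun u => cos (θ u)) (-sin (θ t) * q t) t :=
    fun t => (Real.hasDerivAt_cos (θ t)).comp t (hθ' t)
  have hsinθ : ∀ t, HasDerivAt (fun u => sin (θ u)) (cos (θ t) * q t) t :=
    fun t => (Real.hasDerivAt_sin (θ t)).comp t (hθ' t)
  have hA' : ∀ t, HasDerivAt A (lam t * A t) t := by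
    intro t
    have h := ((hg t).mul (hcosθ t)).add ((hg1 t).mul (hsinθ t))
    refine h.congr_deriv ?_
    have hne : g t^2 + g1 t^2 ≠ 0 := (hr2pos t).ne'
    simp only [hAdef, hlamdef, hqdef, hr2def]
    field_simp
    ring
  have hB' : ∀ t, HasDerivAt B (lam t * B t) t := by
    intro t
    have h := (((hg t).neg).mul (hsinθ t)).add ((hg1 t).mul (hcosθ t))
    refine h.congr_deriv ?_
    have hne : g t^2 + g1 t^2 ≠ 0 := (hr2pos t).ne'
    simp only [hBdef, hlamdef, hqdef, hr2def, Pi.neg_apply]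
    field_simp
    ring
  -- constancy of A e^{-Λ}, B e^{-Λ}
  have hconst : ∀ (F : ℝ → ℝ), (∀ t, HasDerivAt F (lam t * F t) t) →
      ∀ t, F t = F 0 * Real.exp (Λ t) := by
    intro F hF t
    have hd : ∀ u, HasDerivAt (fun v => F v * Real.exp (-Λ v)) 0 u := by
      intro u
      have he : HasDerivAt (fun v => Real.exp (-Λ v)) (Real.exp (-Λ u) * (-lam u)) u :=
        HasDerivAt.exp ((hΛ' u).neg)
      have := (hF u).mul he
      refine this.congr_deriv ?_
      ring
    have hc := is_const_of_deriv_eq_zero (𝕜 := ℝ)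
      (fun x => (hd x).differentiableAt) (fun x => (hd x).deriv) t 0
    simp only [hΛ0, neg_zero, Real.exp_zero, mul_one] at hc
    have hexp : Real.exp (-Λ t) ≠ 0 := Real.exp_ne_zero _
    field_simp [Real.exp_neg] at hc ⊢
    rw [← hc, mul_assoc, ← Real.exp_add, neg_add_cancel, Real.exp_zero, mul_one]
  -- initial values
  set z0 : ℂ := Complex.ofReal (g 0) + Complex.ofReal (g1 0) * Complex.I with hz0def
  have hz0 : z0 ≠ 0 := by
    intro h
    rw [Complex.ext_iff] at h
    simp [hz0def] at h
    have := hr2pos 0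
    simp only [hr2def] at this
    rw [h.1, h.2] at this
    norm_num at this
  have habs : ‖z0‖ = Real.sqrt (r2 0) := by
    rw [Complex.norm_def, Complex.normSq_apply]
    simp only [hz0def, Complex.add_re, Complex.ofReal_re, Complex.mul_re, Complex.I_re,
      Complex.ofReal_im, Complex.I_im, Complex.add_im, Complex.mul_im]
    norm_num
    congr 1
    simp only [hr2def]
    ring
  have hre : z0.re = g 0 := by simp [hz0def]
  have him : z0.im = g1 0 := by simp [hz0def]
  have hcos0 : cos θ0 = g 0 / Real.sqrt (r2 0) := by
    rw [hθ0def, Complex.cos_arg hz0, hre, habs]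
  have hsin0 : sin θ0 = g1 0 / Real.sqrt (r2 0) := by
    rw [hθ0def, Complex.sin_arg, him, habs]
  have hsqrt : Real.sqrt (r2 0) * Real.sqrt (r2 0) = r2 0 := Real.mul_self_sqrt (hr2pos 0).le
  have hsqrtpos : 0 < Real.sqrt (r2 0) := Real.sqrt_pos.mpr (hr2pos 0)
  have hB0 : B 0 = 0 := by
    simp only [hBdef, hθ00, hcos0, hsin0]
    rw [mul_div_assoc', mul_div_assoc', ← add_div, div_eq_zero_iff]
    left; ring
  have hA0 : A 0 = Real.sqrt (r2 0) := by
    simp only [hAdef, hθ00, hcos0, hsin0]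
    rw [mul_div_assoc', mul_div_assoc', ← add_div]
    rw [show g 0 * g 0 + g1 0 * g1 0 = r2 0 by simp only [hr2def]; ring]
    exact Real.div_sqrt
  have hBz : ∀ t, B t = 0 := by
    intro t
    rw [hconst B hB' t, hB0, zero_mul]
  have hAt : ∀ t, A t = Real.sqrt (r2 0) * Real.exp (Λ t) := by
    intro t
    rw [hconst A hA' t, hA0]
  have hApos : ∀ t, 0 < A t := by
    intro t
    rw [hAt t]
    positivity
  have hsc : ∀ t, sin (θ t)^2 + cos (θ t)^2 = 1 := fun t => Real.sin_sq_add_cos_sq _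
  have hgrep : ∀ t, g t = A t * cos (θ t) := by
    intro t
    have h := hBz t
    simp only [hBdef] at h
    simp only [hAdef]
    linear_combination (-Real.sin (θ t)) * h - (g t) * (hsc t)
  have hg1rep : ∀ t, g1 t = A t * sin (θ t) := by
    intro t
    have h := hBz t
    simp only [hBdef] at h
    simp only [hAdef]
    linear_combination (Real.cos (θ t)) * h - (g1 t) * (hsc t)
  have hABkey : ∀ t, A t^2 + B t^2 = r2 t := by
    intro t
    simp only [hAdef, hBdef, hr2def]
    linear_combination (g t^2 + g1 t^2) * hsc t
  have hA2 : ∀ t, A t ^ 2 = r2 t := by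
    intro t
    have hh := hABkey t
    rw [hBz t] at hh
    simpa using hh
  have hqneg : ∀ t, q t < 0 := fun t => div_neg_of_neg_of_pos (hkey t) (hr2pos t)
  have hθanti : StrictAnti θ := strictAnti_of_deriv_neg
    (fun t => by rw [(hθ' t).deriv]; exact hqneg t)
  have hθd : Differentiable ℝ θ := fun t => (hθ' t).differentiableAt
  have hθc : Continuous θ := hθd.continuous
  have hr2per : r2 (0 + 2*π) = r2 0 := by simp only [hr2def, hper 0, hper1 0]
  have hA2π : A (0 + 2*π) = A 0 := by
    have h1 : A (0+2*π)^2 = A 0^2 := by rw [hA2, hA2, hr2per]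
    have h2 := hApos (0+2*π)
    have h3 := hApos 0
    nlinarith
  have hcosper : cos (θ (0 + 2*π)) = cos (θ 0) := by
    have h1 := hgrep (0 + 2*π)
    rw [hper 0, hgrep 0, hA2π] at h1
    exact (mul_left_cancel₀ (hApos 0).ne' h1).symm
  have hsinper : sin (θ (0 + 2*π)) = sin (θ 0) := by
    have h1 := hg1rep (0 + 2*π)
    rw [hper1 0, hg1rep 0, hA2π] at h1
    exact (mul_left_cancel₀ (hApos 0).ne' h1).symm
  obtain ⟨k, hk⟩ := Real.Angle.angle_eq_iff_two_pi_dvd_sub.mp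
    (Real.Angle.cos_sin_inj hcosper.symm hsinper.symm)
  rw [zero_add] at hk
  have hZ : {φ ∈ Set.Ico 0 (2*π) | g φ = 0}
      = {φ ∈ Set.Ico 0 (2*π) | ∃ n : ℤ, θ φ = (π/2) + n*π} := by
    ext φ
    simp only [Set.mem_setOf_eq]
    refine and_congr_right fun _ => ?_
    rw [hgrep φ, mul_eq_zero, or_iff_right (hApos φ).ne', Real.cos_eq_zero_iff]
    constructor
    · rintro ⟨n, hn⟩; exact ⟨n, by rw [hn]; push_cast; ring⟩
    · rintro ⟨n, hn⟩; exact ⟨n, by rw [hn]; push_cast; ring⟩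
  have hC : {φ ∈ Set.Ico 0 (2*π) | g1 φ = 0}
      = {φ ∈ Set.Ico 0 (2*π) | ∃ n : ℤ, θ φ = 0 + n*π} := by
    ext φ
    simp only [Set.mem_setOf_eq]
    refine and_congr_right fun _ => ?_
    rw [hg1rep φ, mul_eq_zero, or_iff_right (hApos φ).ne', Real.sin_eq_zero_iff]
    constructor
    · rintro ⟨n, hn⟩; exact ⟨n, by rw [← hn]; ring⟩
    · rintro ⟨n, hn⟩; exact ⟨n, by rw [hn]; ring⟩
  rw [hZ, hC, count_level θ hθc hθanti k hk (π/2), count_level θ hθc hθanti k hk 0]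


set_option maxHeartbeats 4000000 in
theorem zeros_regular_and_count (D : ℕ) (hD : 2 ≤ D) (f : MvPolynomial (Fin 2) ℝ)
    (hf : f.IsHomogeneous D) (hyp : Hyperbolic f) :
    (∀ x y : ℝ, ¬(x = 0 ∧ y = 0) → eval ![x, y] f = 0 →
      ¬(eval ![x, y] (pderiv 0 f) = 0 ∧ eval ![x, y] (pderiv 1 f) = 0)) ∧
    (∀ φ : ℝ, eval ![Real.cos φ, Real.sin φ] f = 0 →
      deriv (fun t => eval ![Real.cos t, Real.sin t] f) φ ≠ 0) ∧
    {φ ∈ Set.Ico 0 (2 * Real.pi) | eval ![Real.cos φ, Real.sin φ] f = 0}.ncard =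
      {φ ∈ Set.Ico 0 (2 * Real.pi) |
        deriv (fun t => eval ![Real.cos t, Real.sin t] f) φ = 0}.ncard := by
  have hπ := Real.pi_pos
  have hD' : (2:ℝ) ≤ (D:ℝ) := by exact_mod_cast hD
  -- evaluated Hessian
  have hHess : ∀ x y : ℝ, ¬(x = 0 ∧ y = 0) →
      eval ![x, y] (pderiv 0 (pderiv 0 f)) * eval ![x, y] (pderiv 1 (pderiv 1 f))
        - (eval ![x, y] (pderiv 1 (pderiv 0 f)))^2 < 0 := by
    intro x y hne
    have := hyp x y hne
    simpa [Hess] using this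
  -- Part 1
  have part1 : ∀ x y : ℝ, ¬(x = 0 ∧ y = 0) →
      ¬(eval ![x, y] (pderiv 0 f) = 0 ∧ eval ![x, y] (pderiv 1 f) = 0) := by
    rintro x y hne ⟨h0x, h0y⟩
    have h2 := eval_euler1 D f x y hf
    have h3 := eval_euler2 D f x y hf
    rw [h0x, mul_zero] at h2
    rw [h0y, mul_zero] at h3
    have hH := hHess x y hne
    set a := eval ![x, y] (pderiv 0 (pderiv 0 f))
    set b := eval ![x, y] (pderiv 1 (pderiv 0 f))
    set c := eval ![x, y] (pderiv 1 (pderiv 1 f))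
    have hx : (a*c - b^2)*x = 0 := by linear_combination c*h2 - b*h3
    have hy : (a*c - b^2)*y = 0 := by linear_combination (-b)*h2 + a*h3
    have hne2 : a*c - b^2 ≠ 0 := ne_of_lt hH
    rcases mul_eq_zero.mp hx with h | h
    · exact hne2 h
    · rcases mul_eq_zero.mp hy with h' | h'
      · exact hne2 h'
      · exact hne ⟨h, h'⟩
  -- functions
  set g : ℝ → ℝ := fun t => eval ![Real.cos t, Real.sin t] f with hgdef
  set e0 : ℝ → ℝ := fun t => eval ![Real.cos t, Real.sin t] (pderiv 0 f) with he0def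
  set e1 : ℝ → ℝ := fun t => eval ![Real.cos t, Real.sin t] (pderiv 1 f) with he1def
  set e00 : ℝ → ℝ := fun t => eval ![Real.cos t, Real.sin t] (pderiv 0 (pderiv 0 f)) with he00def
  set e01 : ℝ → ℝ := fun t => eval ![Real.cos t, Real.sin t] (pderiv 1 (pderiv 0 f)) with he01def
  set e11 : ℝ → ℝ := fun t => eval ![Real.cos t, Real.sin t] (pderiv 1 (pderiv 1 f)) with he11def
  set g1 : ℝ → ℝ := fun t => -Real.sin t * e0 t + Real.cos t * e1 t with hg1def
  set g2 : ℝ → ℝ := fun t => -Real.cos t * e0 t - Real.sin t * e1 t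
    + (Real.sin t)^2 * e00 t - 2*Real.sin t*Real.cos t*e01 t + (Real.cos t)^2 * e11 t with hg2def
  have hg : ∀ t, HasDerivAt g (g1 t) t := fun t => hasDerivAt_evalCircle f t
  have hg1 : ∀ t, HasDerivAt g1 (g2 t) t := by
    intro t
    have h0' := hasDerivAt_evalCircle (pderiv 0 f) t
    have h1' := hasDerivAt_evalCircle (pderiv 1 f) t
    have hcomb := (((Real.hasDerivAt_sin t).neg.mul h0')).add ((Real.hasDerivAt_cos t).mul h1')
    refine hcomb.congr_deriv ?_
    simp only [hg2def, he0def, he1def, he00def, he01def, he11def, pderiv_comm' 0 1 f, Pi.neg_apply]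
    ring
  have hkey : ∀ t, g t * g2 t - (g1 t)^2 < 0 := by
    intro t
    have hxy : (Real.cos t)^2 + (Real.sin t)^2 = 1 := Real.cos_sq_add_sin_sq t
    have hne : ¬(Real.cos t = 0 ∧ Real.sin t = 0) := by
      rintro ⟨h1, h2⟩; rw [h1, h2] at hxy; norm_num at hxy
    have h1 := eval_euler0 D f (Real.cos t) (Real.sin t) hf
    have h2 := eval_euler1 D f (Real.cos t) (Real.sin t) hf
    have h3 := eval_euler2 D f (Real.cos t) (Real.sin t) hf
    have hH := hHess (Real.cos t) (Real.sin t) hne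
    have := keyineq (D:ℝ) (Real.cos t) (Real.sin t) (e00 t) (e01 t) (e11 t)
      (e0 t) (e1 t) (g t) hD' hxy h1 h2 h3 hH
    simp only [hg1def, hg2def]
    nlinarith [this]
  -- Part 2
  have part2 : ∀ φ : ℝ, g φ = 0 →
      deriv (fun t => eval ![Real.cos t, Real.sin t] f) φ ≠ 0 := by
    intro φ h0 hd
    rw [(hg φ).deriv] at hd
    have := hkey φ
    rw [h0, hd] at this
    norm_num at this
  refine ⟨fun x y hne _ => part1 x y hne, part2, ?_⟩
  -- Part 3
  have hderivset : {φ ∈ Set.Ico 0 (2 * Real.pi) |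
      deriv (fun t => eval ![Real.cos t, Real.sin t] f) φ = 0}
      = {φ ∈ Set.Ico 0 (2 * Real.pi) | g1 φ = 0} := by
    ext φ
    simp only [Set.mem_setOf_eq]
    rw [(hg φ).deriv]
  rw [hderivset]
  have hconte : ∀ p : MvPolynomial (Fin 2) ℝ,
      Continuous (fun t => eval ![Real.cos t, Real.sin t] p) := by
    intro p
    have hd : Differentiable ℝ (fun t => eval ![Real.cos t, Real.sin t] p) :=
      fun t => (hasDerivAt_evalCircle p t).differentiableAt
    exact hd.continuous
  have hg2c : Continuous g2 := by
    simp only [hg2def]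
    exact ((((continuous_cos.neg.mul (hconte _)).sub
      (continuous_sin.mul (hconte _))).add
      ((continuous_sin.pow 2).mul (hconte _))).sub
      (((continuous_const.mul continuous_sin).mul continuous_cos).mul (hconte _))).add
      ((continuous_cos.pow 2).mul (hconte _))
  have hper : ∀ t, g (t + 2*Real.pi) = g t := by
    intro t
    simp only [hgdef, Real.cos_add_two_pi, Real.sin_add_two_pi]
  have hper1 : ∀ t, g1 (t + 2*Real.pi) = g1 t := by
    intro t
    simp only [hg1def, he0def, he1def, Real.cos_add_two_pi, Real.sin_add_two_pi]
  exact count_eq g g1 g2 hg hg1 hg2c hper hper1 hkey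
end

section
/- Let f be a homogeneous polynomial of degree D ≥ 2 in two real variables and F(φ) = f(cos φ, sin φ). If f is hyperbolic, then for every φ the hyperbolicity inequality D²F(φ)² + D·F(φ)·F''(φ) − (D−1)·F'(φ)² < 0 holds. -/
open MvPolynomial Real

lemma degree_fin2 (d : Fin 2 →₀ ℕ) : d.degree = d 0 + d 1 := by
  rw [show d.degree = ∑ i ∈ d.support, d i from rfl,
    Finset.sum_subset (Finset.subset_univ _) (fun i _ hi => Finsupp.notMem_support_iff.mp hi),
    Fin.sum_univ_two]

lemma euler_eval (n : ℕ) (g : MvPolynomial (Fin 2) ℝ) (hg : g.IsHomogeneous n) (x y : ℝ) :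
    x * eval ![x, y] (pderiv 0 g) + y * eval ![x, y] (pderiv 1 g)
      = n * eval ![x, y] g := by
  conv_lhs => rw [← support_sum_monomial_coeff g]
  conv_rhs => rw [← support_sum_monomial_coeff g]
  rw [map_sum (pderiv 0), map_sum (pderiv 1), map_sum, map_sum, map_sum,
    Finset.mul_sum, Finset.mul_sum, Finset.mul_sum, ← Finset.sum_add_distrib]
  apply Finset.sum_congr rfl
  intro d hd
  have hdeg : d 0 + d 1 = n := by
    rw [← degree_fin2]
    by_contra h
    exact (mem_support_iff.mp hd) (hg.coeff_eq_zero h)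
  rw [pderiv_monomial, pderiv_monomial, eval_monomial, eval_monomial, eval_monomial,
    Finsupp.prod_pow, Finsupp.prod_pow, Finsupp.prod_pow,
    Fin.prod_univ_two, Fin.prod_univ_two, Fin.prod_univ_two]
  simp only [Finsupp.tsub_apply, Finsupp.single_apply, Matrix.cons_val_zero,
    Matrix.cons_val_one, Matrix.head_cons, if_pos rfl]
  rw [← hdeg]
  rcases Nat.eq_zero_or_eq_succ_pred (d 0) with h0 | h0 <;>
  rcases Nat.eq_zero_or_eq_succ_pred (d 1) with h1 | h1 <;>
    rw [h0, h1] <;> norm_num <;> ring_nf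

lemma pderiv_isHomogeneous {n : ℕ} {g : MvPolynomial (Fin 2) ℝ}
    (hg : g.IsHomogeneous (n + 1)) (i : Fin 2) : (pderiv i g).IsHomogeneous n := by
  rw [← support_sum_monomial_coeff g, map_sum]
  apply IsHomogeneous.sum
  intro d hd
  have hdeg : d 0 + d 1 = n + 1 := by
    rw [← degree_fin2]
    by_contra h
    exact (mem_support_iff.mp hd) (hg.coeff_eq_zero h)
  rw [pderiv_monomial]
  by_cases h : d i = 0
  · rw [h]; norm_num; exact isHomogeneous_zero _ _ _
  · apply isHomogeneous_monomial
    rw [degree_fin2]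
    fin_cases i <;>
      simp only [Finsupp.tsub_apply, Finsupp.single_apply] at * <;>
      simp_all <;> omega

lemma pderiv_pderiv_comm (i j : Fin 2) (g : MvPolynomial (Fin 2) ℝ) :
    pderiv i (pderiv j g) = pderiv j (pderiv i g) := by
  have hXX : ∀ a b : Fin 2, ∀ k : Fin 2,
      pderiv a (pderiv b (X k : MvPolynomial (Fin 2) ℝ)) = 0 := by
    intro a b k
    simp only [pderiv_X, Pi.single_apply]
    split_ifs <;> simp
  induction g using MvPolynomial.induction_on with
  | C a => simp
  | add p q hp hq => simp [hp, hq]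
  | mul_X p k ih =>
      simp only [pderiv_mul, map_add, pderiv_mul, ih, hXX, mul_zero, add_zero]
      ring

lemma hasDerivAt_eval (g : MvPolynomial (Fin 2) ℝ) (t : ℝ) :
    HasDerivAt (fun s => eval ![Real.cos s, Real.sin s] g)
      (-Real.sin t * eval ![Real.cos t, Real.sin t] (pderiv 0 g)
        + Real.cos t * eval ![Real.cos t, Real.sin t] (pderiv 1 g)) t := by
  induction g using MvPolynomial.induction_on with
  | C a => simpa using hasDerivAt_const t a
  | add p q hp hq =>
      simp only [map_add]
      refine (hp.add hq).congr_deriv ?_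
      ring
  | mul_X p k ih =>
      fin_cases k <;> simp only [Fin.zero_eta, Fin.mk_one]
      · simp only [map_mul, eval_X, Matrix.cons_val_zero, pderiv_mul, map_add,
          pderiv_X_self, pderiv_X_of_ne (show (0:Fin 2) ≠ 1 by decide), map_one, mul_one, mul_zero]
        refine (ih.mul (Real.hasDerivAt_cos t)).congr_deriv ?_
        simp only [map_zero]
        ring
      · simp only [map_mul, eval_X, Matrix.cons_val_one, Matrix.head_cons, pderiv_mul, map_add,
          pderiv_X_self, pderiv_X_of_ne (show (1:Fin 2) ≠ 0 by decide), map_one, mul_one, mul_zero]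
        refine (ih.mul (Real.hasDerivAt_sin t)).congr_deriv ?_
        simp only [map_zero, Matrix.cons_val_zero]
        ring

theorem hyperbolicity_inequality (D : ℕ) (hD : 2 ≤ D) (f : MvPolynomial (Fin 2) ℝ)
    (hf : f.IsHomogeneous D) (hyp : Hyperbolic f) (φ : ℝ) :
    (D : ℝ) ^ 2 * (eval ![Real.cos φ, Real.sin φ] f) ^ 2
      + (D : ℝ) * eval ![Real.cos φ, Real.sin φ] f
          * deriv (deriv (fun t => eval ![Real.cos t, Real.sin t] f)) φ
      - ((D : ℝ) - 1) * (deriv (fun t => eval ![Real.cos t, Real.sin t] f) φ) ^ 2 < 0 := by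
  obtain ⟨k, rfl⟩ : ∃ k, D = k + 2 := ⟨D - 2, by omega⟩
  have hpyth : Real.cos φ ^ 2 + Real.sin φ ^ 2 = 1 := by
    have := Real.sin_sq_add_cos_sq φ; linarith
  -- first derivative
  have hF1 : deriv (fun t => eval ![Real.cos t, Real.sin t] f)
      = fun t => -Real.sin t * eval ![Real.cos t, Real.sin t] (pderiv 0 f)
        + Real.cos t * eval ![Real.cos t, Real.sin t] (pderiv 1 f) :=
    funext fun t => (hasDerivAt_eval f t).deriv
  have hF1' : deriv (fun t => eval ![Real.cos t, Real.sin t] f) φ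
      = -Real.sin φ * eval ![Real.cos φ, Real.sin φ] (pderiv 0 f)
        + Real.cos φ * eval ![Real.cos φ, Real.sin φ] (pderiv 1 f) :=
    (hasDerivAt_eval f φ).deriv
  -- second derivative
  have hF2 : deriv (deriv (fun t => eval ![Real.cos t, Real.sin t] f)) φ
      = (-Real.cos φ * eval ![Real.cos φ, Real.sin φ] (pderiv 0 f)
          + -Real.sin φ * (-Real.sin φ * eval ![Real.cos φ, Real.sin φ] (pderiv 0 (pderiv 0 f))
              + Real.cos φ * eval ![Real.cos φ, Real.sin φ] (pderiv 1 (pderiv 0 f))))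
        + (-Real.sin φ * eval ![Real.cos φ, Real.sin φ] (pderiv 1 f)
          + Real.cos φ * (-Real.sin φ * eval ![Real.cos φ, Real.sin φ] (pderiv 0 (pderiv 1 f))
              + Real.cos φ * eval ![Real.cos φ, Real.sin φ] (pderiv 1 (pderiv 1 f)))) := by
    rw [hF1]
    exact (((Real.hasDerivAt_sin φ).neg.mul (hasDerivAt_eval (pderiv 0 f) φ)).add
      ((Real.hasDerivAt_cos φ).mul (hasDerivAt_eval (pderiv 1 f) φ))).deriv
  -- symmetry of second derivatives
  have hBB : eval ![Real.cos φ, Real.sin φ] (pderiv 0 (pderiv 1 f))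
      = eval ![Real.cos φ, Real.sin φ] (pderiv 1 (pderiv 0 f)) := by
    rw [pderiv_pderiv_comm]
  -- Euler identities
  have hE1 := euler_eval (k + 2) f hf (Real.cos φ) (Real.sin φ)
  have hE2 := euler_eval (k + 1) (pderiv 0 f) (pderiv_isHomogeneous hf 0)
    (Real.cos φ) (Real.sin φ)
  have hE3 := euler_eval (k + 1) (pderiv 1 f) (pderiv_isHomogeneous hf 1)
    (Real.cos φ) (Real.sin φ)
  -- hyperbolicity at the point
  have hHess := hyp (Real.cos φ) (Real.sin φ) (by
    rintro ⟨h1, h2⟩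
    rw [h1, h2] at hpyth
    norm_num at hpyth)
  rw [show Hess f = pderiv 0 (pderiv 0 f) * pderiv 1 (pderiv 1 f)
    - (pderiv 1 (pderiv 0 f)) ^ 2 from rfl, map_sub, map_mul, map_pow] at hHess
  rw [hF1', hF2, hBB]
  push_cast at hE1 hE2 hE3 ⊢
  set c := Real.cos φ
  set s := Real.sin φ
  set F0 := eval ![c, s] f
  set P := eval ![c, s] (pderiv 0 f)
  set Q := eval ![c, s] (pderiv 1 f)
  set A := eval ![c, s] (pderiv 0 (pderiv 0 f))
  set B := eval ![c, s] (pderiv 1 (pderiv 0 f))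
  set C2 := eval ![c, s] (pderiv 1 (pderiv 1 f))
  rw [hBB] at hE3
  have h1 : ((k : ℝ) + 1) * (((k : ℝ) + 2) * F0) = c ^ 2 * A + 2 * c * s * B + s ^ 2 * C2 := by
    linear_combination (-((k:ℝ)+1)) * hE1 - c * hE2 - s * hE3
  have h2 : ((k : ℝ) + 1) * (-s * P + c * Q)
      = -(c * s) * A + (c ^ 2 - s ^ 2) * B + c * s * C2 := by
    linear_combination s * hE2 - c * hE3
  have hkey : ((k : ℝ) + 1) * (((k : ℝ) + 2) ^ 2 * F0 ^ 2
      + ((k : ℝ) + 2) * F0 * ((-c * P + -s * (-s * A + c * B))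
          + (-s * Q + c * (-s * B + c * C2)))
      - (((k : ℝ) + 2) - 1) * (-s * P + c * Q) ^ 2) = A * C2 - B ^ 2 := by
    linear_combination (-(((k:ℝ)+1) * ((k:ℝ)+2) * F0)) * hE1
      + (s^2 * A - 2*s*c*B + c^2*C2) * h1
      - (((k:ℝ)+1) * (-s*P + c*Q) + (-(c*s)*A + (c^2-s^2)*B + c*s*C2)) * h2
      + ((c^2 + s^2 + 1) * (A*C2 - B^2)) * hpyth
  nlinarith [hkey, hHess]
end
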